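/- Let λ₁ ≤ ⋯ ≤ λ_n = n with λ_i ≥ i. Then (q−1)^n · Σ_σ q^{p(σ)} = q^{n(n−1)/2} · ∏_{i=1}^{n} (q^{λ_i+1−i} − 1), where the sum is over permutations σ ∈ S_n with σ(i) ≤ λ_i for all i, and p(σ) = inv(σ) + n(n−1)/2. -/

import Mathlib

open Finset Equiv

private def invCount {m : ℕ} (σ : Equiv.Perm (Fin m)) : ℕ :=
  (Finset.univ.filter (fun p : Fin m × Fin m => p.1 < p.2 ∧ σ p.2 < σ p.1)).card

private lemma lemmaA {m : ℕ} (σ : Equiv.Perm (Fin m)) :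
    (Finset.univ.filter
      (fun p : Fin m × Fin m => p.2 < σ p.1 ∨ σ⁻¹ p.2 < p.1)).card
    = invCount σ + m * (m - 1) / 2 := by
  rw [Finset.card_filter]
  have split : ∀ p : Fin m × Fin m,
      (if p.2 < σ p.1 ∨ σ⁻¹ p.2 < p.1 then (1:ℕ) else 0)
      = (if p.2 < σ p.1 then 1 else 0) + (if σ⁻¹ p.2 < p.1 ∧ ¬ p.2 < σ p.1 then 1 else 0) := by
    intro p
    by_cases h1 : p.2 < σ p.1 <;> by_cases h2 : σ⁻¹ p.2 < p.1 <;> simp [h1, h2]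
  rw [Finset.sum_congr rfl (fun p _ => split p), Finset.sum_add_distrib]
  have S1 : ∑ p : Fin m × Fin m, (if p.2 < σ p.1 then (1:ℕ) else 0) = m * (m-1) / 2 := by
    rw [Fintype.sum_prod_type]
    have h1 : ∀ i : Fin m, (∑ j : Fin m, if j < σ i then (1:ℕ) else 0) = (σ i : ℕ) := by
      intro i
      rw [← Finset.card_filter]
      have : Finset.univ.filter (fun j : Fin m => j < σ i) = Finset.Iio (σ i) := by
        ext j; simp
      rw [this, Fin.card_Iio]
    calc (∑ i : Fin m, ∑ j : Fin m, if j < σ i then (1:ℕ) else 0)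
        = ∑ i : Fin m, ((σ i : ℕ)) := Finset.sum_congr rfl (fun i _ => h1 i)
      _ = ∑ v : Fin m, (v : ℕ) := Equiv.sum_comp σ (fun v : Fin m => (v : ℕ))
      _ = ∑ k ∈ Finset.range m, k := Fin.sum_univ_eq_sum_range (fun v => v) m
      _ = m * (m-1) / 2 := Finset.sum_range_id m
  have S2 : ∑ p : Fin m × Fin m, (if σ⁻¹ p.2 < p.1 ∧ ¬ p.2 < σ p.1 then (1:ℕ) else 0)
      = invCount σ := by
    have e1 : ∑ p : Fin m × Fin m, (if σ⁻¹ p.2 < p.1 ∧ ¬ p.2 < σ p.1 then (1:ℕ) else 0)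
        = ∑ p : Fin m × Fin m, (if p.2 < p.1 ∧ σ p.1 < σ p.2 then (1:ℕ) else 0) := by
      rw [← Equiv.sum_comp (Equiv.prodCongr (Equiv.refl (Fin m)) σ)
        (fun p : Fin m × Fin m => if σ⁻¹ p.2 < p.1 ∧ ¬ p.2 < σ p.1 then (1:ℕ) else 0)]
      refine Finset.sum_congr rfl (fun p _ => ?_)
      have h2 : σ⁻¹ (σ p.2) = p.2 := Equiv.symm_apply_apply σ p.2
      simp only [Equiv.prodCongr_apply, Equiv.coe_refl, Prod.map, id, h2]
      congr 1
      have hσ : σ p.2 < σ p.1 ∨ σ p.1 < σ p.2 ∨ σ p.1 = σ p.2 := by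
        rcases lt_trichotomy (σ p.2) (σ p.1) with h|h|h
        · exact Or.inl h
        · exact Or.inr (Or.inr h.symm)
        · exact Or.inr (Or.inl h)
      by_cases hlt : p.2 < p.1
      · have hne : σ p.1 ≠ σ p.2 := fun h => (ne_of_gt hlt) (σ.injective h)
        simp only [eq_iff_iff]
        constructor
        · rintro ⟨h1, h2⟩
          exact ⟨h1, lt_of_le_of_ne (not_lt.mp h2) hne⟩
        · rintro ⟨h1, h2⟩
          exact ⟨h1, not_lt.mpr (le_of_lt h2)⟩
      · simp [hlt]
    rw [e1, invCount, Finset.card_filter]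
    exact Fintype.sum_equiv (Equiv.prodComm _ _) _ _ (fun p => by
      simp [Equiv.prodComm]
      congr 1)
  rw [S1, S2, Nat.add_comm]

private def gmap {n : ℕ} (v : Fin (n+1)) (e : Equiv.Perm (Fin n)) : Equiv.Perm (Fin (n+1)) :=
  (finSuccEquiv n).trans ((e.optionCongr).trans (finSuccEquiv' v).symm)

private lemma gmap_zero {n : ℕ} (v : Fin (n+1)) (e : Equiv.Perm (Fin n)) :
    gmap v e 0 = v := by
  simp [gmap]

private lemma gmap_succ {n : ℕ} (v : Fin (n+1)) (e : Equiv.Perm (Fin n)) (j : Fin n) :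
    gmap v e j.succ = v.succAbove (e j) := by
  simp [gmap]

private lemma val_succAbove {n : ℕ} (v : Fin (n+1)) (x : Fin n) :
    ((v.succAbove x) : ℕ) = if (x:ℕ) < (v:ℕ) then (x:ℕ) else (x:ℕ)+1 := by
  by_cases h : Fin.castSucc x < v
  · rw [Fin.succAbove_of_castSucc_lt _ _ h]
    have : (x:ℕ) < (v:ℕ) := by simpa [Fin.lt_def] using h
    simp [this]
  · rw [Fin.succAbove_of_le_castSucc _ _ (not_lt.mp h)]
    have : ¬ (x:ℕ) < (v:ℕ) := by simpa [Fin.lt_def] using h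
    simp [this]

private lemma gmap_surj {n : ℕ} (σ : Equiv.Perm (Fin (n+1))) :
    ∃ (v : Fin (n+1)) (e : Equiv.Perm (Fin n)), gmap v e = σ := by
  set v : Fin (n+1) := σ 0 with hv
  set τ : Option (Fin n) ≃ Option (Fin n) :=
    ((finSuccEquiv n).symm.trans (σ.trans (finSuccEquiv' v))) with hτ
  have hnone : τ none = none := by
    simp [hτ, finSuccEquiv'_at, ← hv]
  refine ⟨v, Equiv.removeNone τ, ?_⟩
  have hsome : ∀ j : Fin n, σ j.succ = v.succAbove (Equiv.removeNone τ j) := by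
    intro j
    have hex : ∃ x', τ (some j) = some x' := by
      cases h : τ (some j) with
      | none =>
        exact absurd (τ.injective (h.trans hnone.symm)) (by simp)
      | some x => exact ⟨x, rfl⟩
    have h1 : some (Equiv.removeNone τ j) = τ (some j) := Equiv.removeNone_some τ hex
    have h2 : τ (some j) = finSuccEquiv' v (σ j.succ) := by
      simp [hτ]
    have h3 : (finSuccEquiv' v).symm (some (Equiv.removeNone τ j)) = σ j.succ := by
      rw [h1, h2]; simp
    rw [← h3]; simp
  ext i
  refine Fin.cases ?_ ?_ i
  · rw [gmap_zero]
  · intro j; rw [gmap_succ, hsome]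

private lemma gmap_inj {n : ℕ} (v v' : Fin (n+1)) (e e' : Equiv.Perm (Fin n))
    (h : gmap v e = gmap v' e') : v = v' ∧ e = e' := by
  have h0 : v = v' := by
    have := congrArg (fun σ : Equiv.Perm (Fin (n+1)) => σ 0) h
    simpa [gmap_zero] using this
  refine ⟨h0, ?_⟩
  ext j
  have := congrArg (fun σ : Equiv.Perm (Fin (n+1)) => σ j.succ) h
  simp only [gmap_succ, h0] at this
  have := Fin.succAbove_right_injective (p := v') this
  simpa [Fin.ext_iff] using this

private lemma card_lt_filter {n : ℕ} (c : ℕ) (hc : c ≤ n) :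
    (Finset.univ.filter (fun y : Fin n => (y:ℕ) < c)).card = c := by
  rw [← Finset.card_range c]
  apply Finset.card_bij (fun (y : Fin n) _ => (y:ℕ))
  · intro a ha; simp only [Finset.mem_filter, Finset.mem_univ, true_and] at ha
    simpa using ha
  · intro a _ b _ h; exact Fin.val_injective h
  · intro b hb
    simp only [Finset.mem_range] at hb
    exact ⟨⟨b, by omega⟩, by simp [hb], rfl⟩

private lemma invCount_gmap {n : ℕ} (v : Fin (n+1)) (e : Equiv.Perm (Fin n))
    (hv : (v:ℕ) ≤ n) : invCount (gmap v e) = (v:ℕ) + invCount e := by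
  classical
  rw [invCount, Finset.card_filter]
  rw [Fintype.sum_prod_type]
  rw [Fin.sum_univ_succ]
  have hfirst : (∑ b : Fin (n+1),
      if (0 : Fin (n+1)) < b ∧ gmap v e b < gmap v e 0 then (1:ℕ) else 0) = (v:ℕ) := by
    rw [Fin.sum_univ_succ]
    have h0 : ¬ ((0 : Fin (n+1)) < 0 ∧ gmap v e 0 < gmap v e 0) := by simp
    rw [if_neg h0, zero_add]
    have heach : ∀ k : Fin n,
        (if (0 : Fin (n+1)) < k.succ ∧ gmap v e k.succ < gmap v e 0 then (1:ℕ) else 0)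
        = if ((e k : ℕ) < (v:ℕ)) then 1 else 0 := by
      intro k
      congr 1
      simp only [eq_iff_iff, gmap_succ, gmap_zero]
      constructor
      · rintro ⟨-, h⟩
        have := Fin.lt_def.mp h
        rw [val_succAbove] at this
        split at this <;> omega
      · intro h
        refine ⟨Fin.succ_pos k, ?_⟩
        rw [Fin.lt_def, val_succAbove, if_pos h]
        exact h
    rw [Finset.sum_congr rfl (fun k _ => heach k)]
    rw [Equiv.sum_comp e (fun y : Fin n => if (y:ℕ) < (v:ℕ) then (1:ℕ) else 0)]
    rw [← Finset.card_filter]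
    exact card_lt_filter _ hv
  rw [hfirst]
  congr 1
  have heach : ∀ j : Fin n, (∑ b : Fin (n+1),
      if j.succ < b ∧ gmap v e b < gmap v e j.succ then (1:ℕ) else 0)
      = ∑ k : Fin n, if j < k ∧ e k < e j then (1:ℕ) else 0 := by
    intro j
    rw [Fin.sum_univ_succ]
    have h0 : ¬ (j.succ < 0 ∧ gmap v e 0 < gmap v e j.succ) := by
      simp [Fin.not_lt_zero]
    rw [if_neg h0, zero_add]
    refine Finset.sum_congr rfl (fun k _ => ?_)
    congr 1
    simp only [eq_iff_iff, gmap_succ]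
    rw [Fin.succ_lt_succ_iff, Fin.succAbove_lt_succAbove_iff]
  rw [Finset.sum_congr rfl (fun j _ => heach j)]
  rw [invCount, Finset.card_filter, Fintype.sum_prod_type]

private lemma adm_iff {n : ℕ} (lam : Fin (n+1) → ℕ) (hmono : Monotone lam)
    (hge : ∀ i : Fin (n+1), (i:ℕ)+1 ≤ lam i)
    (v : Fin (n+1)) (e : Equiv.Perm (Fin n)) :
    (∀ i : Fin (n+1), ((gmap v e) i : ℕ) < lam i) ↔
      ((v:ℕ) < lam 0 ∧ ∀ j : Fin n, (e j : ℕ) < lam j.succ - 1) := by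
  constructor
  · intro h
    have h0 : (v:ℕ) < lam 0 := by simpa [gmap_zero] using h 0
    refine ⟨h0, fun j => ?_⟩
    have hj := h j.succ
    rw [gmap_succ, val_succAbove] at hj
    have hle0 : lam 0 ≤ lam j.succ := hmono (Fin.zero_le _)
    split at hj <;> omega
  · rintro ⟨h0, h⟩ i
    refine Fin.cases ?_ ?_ i
    · simpa [gmap_zero] using h0
    · intro j
      rw [gmap_succ, val_succAbove]
      have hle0 : lam 0 ≤ lam j.succ := hmono (Fin.zero_le _)
      have := h j
      split <;> omega

private lemma keyLemma : ∀ (m : ℕ) (lam : Fin m → ℕ), Monotone lam →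
    (∀ i : Fin m, (i:ℕ)+1 ≤ lam i) → (∀ i : Fin m, lam i ≤ m) → ∀ q : ℤ,
    (∑ σ ∈ Finset.univ.filter (fun σ : Equiv.Perm (Fin m) => ∀ i, ((σ i : ℕ)) < lam i),
      q ^ invCount σ)
    = ∏ i : Fin m, ∑ k ∈ Finset.range (lam i - (i:ℕ)), q ^ k := by
  intro m
  induction m with
  | zero =>
    intro lam _ _ _ q
    simp [invCount]
  | succ n ih =>
    intro lam hmono hge hle q
    set lam' : Fin n → ℕ := fun j => lam j.succ - 1 with hlam'
    have hmono' : Monotone lam' := by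
      intro a b hab
      have : lam a.succ ≤ lam b.succ := hmono (by simpa [Fin.succ_le_succ_iff] using hab)
      simp only [hlam']
      omega
    have hge' : ∀ j : Fin n, (j:ℕ)+1 ≤ lam' j := by
      intro j
      have := hge j.succ
      simp only [Fin.val_succ] at this
      simp only [hlam']; omega
    have hle' : ∀ j : Fin n, lam' j ≤ n := by
      intro j
      have := hle j.succ
      simp only [hlam']; omega
    have hlam0 : lam 0 ≤ n + 1 := hle 0
    -- rewrite LHS as a sum over pairs
    have hbij :
        (∑ σ ∈ Finset.univ.filter
            (fun σ : Equiv.Perm (Fin (n+1)) => ∀ i, ((σ i : ℕ)) < lam i),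
          q ^ invCount σ)
        = ∑ p ∈ Finset.univ.filter
            (fun p : Fin (n+1) × Equiv.Perm (Fin n) =>
              ((p.1 : ℕ) < lam 0 ∧ ∀ j : Fin n, ((p.2 j : ℕ)) < lam' j)),
          q ^ ((p.1 : ℕ) + invCount p.2) := by
      refine (Finset.sum_bij (fun p _ => gmap p.1 p.2) ?_ ?_ ?_ ?_).symm
      · intro p hp
        simp only [Finset.mem_filter, Finset.mem_univ, true_and] at hp ⊢
        have := (adm_iff lam hmono hge p.1 p.2).mpr
        refine this ⟨hp.1, fun j => ?_⟩
        have := hp.2 j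
        simp only [hlam'] at this
        exact this
      · intro p _ p' _ h
        obtain ⟨h1, h2⟩ := gmap_inj _ _ _ _ h
        exact Prod.ext h1 h2
      · intro σ hσ
        simp only [Finset.mem_filter, Finset.mem_univ, true_and] at hσ
        obtain ⟨v, e, hve⟩ := gmap_surj σ
        refine ⟨(v, e), ?_, hve⟩
        simp only [Finset.mem_filter, Finset.mem_univ, true_and]
        have := (adm_iff lam hmono hge v e).mp (by rw [hve]; exact hσ)
        exact ⟨this.1, fun j => this.2 j⟩
      · intro p hp
        simp only [Finset.mem_filter, Finset.mem_univ, true_and] at hp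
        rw [invCount_gmap p.1 p.2 (by omega)]
    rw [hbij]
    have hprodset :
        Finset.univ.filter (fun p : Fin (n+1) × Equiv.Perm (Fin n) =>
            ((p.1 : ℕ) < lam 0 ∧ ∀ j : Fin n, ((p.2 j : ℕ)) < lam' j))
        = (Finset.univ.filter (fun v : Fin (n+1) => (v:ℕ) < lam 0)) ×ˢ
          (Finset.univ.filter (fun e : Equiv.Perm (Fin n) =>
            ∀ j : Fin n, ((e j : ℕ)) < lam' j)) := by
      ext p
      simp [Finset.mem_filter, Finset.mem_product, and_assoc]
    rw [hprodset, Finset.sum_product]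
    have hstep : ∀ v : Fin (n+1),
        (∑ e ∈ Finset.univ.filter (fun e : Equiv.Perm (Fin n) =>
            ∀ j : Fin n, ((e j : ℕ)) < lam' j), q ^ ((v:ℕ) + invCount e))
        = q ^ (v:ℕ) * ∑ e ∈ Finset.univ.filter (fun e : Equiv.Perm (Fin n) =>
            ∀ j : Fin n, ((e j : ℕ)) < lam' j), q ^ invCount e := by
      intro v
      rw [Finset.mul_sum]
      exact Finset.sum_congr rfl (fun e _ => pow_add q _ _)
    rw [Finset.sum_congr rfl (fun v _ => hstep v), ← Finset.sum_mul]
    rw [ih lam' hmono' hge' hle' q]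
    have hvsum : (∑ v ∈ Finset.univ.filter (fun v : Fin (n+1) => (v:ℕ) < lam 0),
        q ^ (v:ℕ)) = ∑ k ∈ Finset.range (lam 0), q ^ k := by
      apply Finset.sum_bij (fun (v : Fin (n+1)) _ => (v:ℕ))
      · intro a ha
        simp only [Finset.mem_filter, Finset.mem_univ, true_and] at ha
        simpa using ha
      · intro a _ b _ h; exact Fin.val_injective h
      · intro b hb
        simp only [Finset.mem_range] at hb
        exact ⟨⟨b, by omega⟩, by simp [hb], rfl⟩
      · intro a _; rfl
    rw [hvsum]
    rw [Fin.prod_univ_succ]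
    simp only [Fin.val_zero, Nat.sub_zero, Fin.val_succ]
    congr 1
    refine Finset.prod_congr rfl (fun j _ => ?_)
    congr 2
    simp only [hlam']
    omega

/-- (q−1)^n · Σ_σ q^{p(σ)} = q^{n(n−1)/2} · ∏ (q^{λ_i+1−i} − 1), the sum being over
σ ∈ S_n with σ(i) ≤ λ_i for all i (0-indexed: (σ i) < lam i), where
p(σ) = |{(i,j) : j < σ(i) or i > σ⁻¹(j)}|. -/
theorem stmt9 (n : ℕ) (hn : 0 < n) (lam : Fin n → ℕ) (hmono : Monotone lam)
    (hge : ∀ i : Fin n, (i : ℕ) + 1 ≤ lam i) (hle : ∀ i : Fin n, lam i ≤ n)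
    (hlast : lam ⟨n - 1, by omega⟩ = n) (q : ℤ) :
    (q - 1) ^ n *
      ∑ σ ∈ Finset.univ.filter
          (fun σ : Equiv.Perm (Fin n) => ∀ i : Fin n, ((σ i : ℕ)) < lam i),
        q ^ (Finset.univ.filter
          (fun p : Fin n × Fin n => p.2 < σ p.1 ∨ σ⁻¹ p.2 < p.1)).card
      = q ^ (n * (n - 1) / 2) * ∏ i : Fin n, (q ^ (lam i - (i : ℕ)) - 1) := by
  have hrw : ∀ σ ∈ Finset.univ.filter
      (fun σ : Equiv.Perm (Fin n) => ∀ i : Fin n, ((σ i : ℕ)) < lam i),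
      q ^ (Finset.univ.filter
        (fun p : Fin n × Fin n => p.2 < σ p.1 ∨ σ⁻¹ p.2 < p.1)).card
      = q ^ (n * (n - 1) / 2) * q ^ invCount σ := by
    intro σ _
    rw [lemmaA σ, pow_add, mul_comm]
  rw [Finset.sum_congr rfl hrw, ← Finset.mul_sum, keyLemma n lam hmono hge hle q,
    mul_left_comm]
  congr 1
  have hpow : (q - 1) ^ n = ∏ _i : Fin n, (q - 1) := by
    rw [Finset.prod_const, Finset.card_univ, Fintype.card_fin]
  rw [hpow, ← Finset.prod_mul_distrib]
  refine Finset.prod_congr rfl (fun i _ => ?_)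
  rw [mul_comm, geom_sum_mul]
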